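/- For the complete binary tree of height h ≥ 1, viewed as the prefix order on binary strings of length at most h, the family consisting of the left-to-right DFS traversal and the right-to-left DFS traversal is a 2-hitting family, and no family of size 1 is 2-hitting; hence the smallest 2-hitting family has size exactly 2. -/

import Mathlib

/-- A schedule for a partial order is a linear extension: a linear order
relation `r` that extends the partial order. -/
def IsSchedule {α : Type*} [PartialOrder α] (r : α → α → Prop) : Prop :=
  IsLinearOrder α r ∧ ∀ x y : α, x ≤ y → r x y

/-- A schedule `r` hits the tuple `a` if it orders `a 0, a 1, ...` in this order. -/
def Hits {α : Type*} (r : α → α → Prop) {d : ℕ} (a : Fin d → α) : Prop :=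
  ∀ i j : Fin d, i < j → r (a i) (a j)

/-- A `d`-tuple of distinct events is admissible if no later component is
strictly below an earlier one. -/
def Admissible {α : Type*} [PartialOrder α] {d : ℕ} (a : Fin d → α) : Prop :=
  Function.Injective a ∧ ∀ i j : Fin d, i < j → ¬ (a j < a i)

/-- A family of schedules (indexed by `Fin k`) is `d`-hitting if every member is a
schedule and every admissible `d`-tuple is hit by some member. -/
def IsHittingFamily {α : Type*} [PartialOrder α] {k : ℕ} (F : Fin k → (α → α → Prop)) (d : ℕ) : Prop :=
  (∀ i, IsSchedule (F i)) ∧ ∀ a : Fin d → α, Admissible a → ∃ i, Hits (F i) a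

/-- The complete binary tree of height `h`: binary strings of length at most `h`. -/
def BTree (h : ℕ) := {l : List Bool // l.length ≤ h}

/-- The prefix partial order on the complete binary tree. -/
instance BTree.instPartialOrder {h : ℕ} : PartialOrder (BTree h) where
  le x y := x.1 <+: y.1
  le_refl x := List.prefix_refl x.1
  le_trans _ _ _ h1 h2 := List.IsPrefix.trans h1 h2
  le_antisymm _ _ h1 h2 :=
    Subtype.ext (h1.eq_of_length (le_antisymm h1.length_le h2.length_le))

/-- The left-to-right DFS order on binary strings: `x` comes before `y` iff `x` is a
prefix of `y`, or `x = u ++ 0 x'` and `y = u ++ 1 y'` (with `0 = false`, `1 = true`). -/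
def dfsL (x y : List Bool) : Prop :=
  x <+: y ∨ ∃ u x' y' : List Bool, x = u ++ false :: x' ∧ y = u ++ true :: y'

/-- The right-to-left DFS order on binary strings (mirror image of `dfsL`). -/
def dfsR (x y : List Bool) : Prop :=
  x <+: y ∨ ∃ u x' y' : List Bool, x = u ++ true :: x' ∧ y = u ++ false :: y'

/-- Generic DFS order parametrized by which bit goes first. -/
def dfsGen (b : Bool) (x y : List Bool) : Prop :=
  x <+: y ∨ ∃ u x' y' : List Bool, x = u ++ b :: x' ∧ y = u ++ (!b) :: y'

lemma trich (x y : List Bool) : x <+: y ∨ y <+: x ∨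
    ∃ (u x' y' : List Bool) (b : Bool), x = u ++ b :: x' ∧ y = u ++ (!b) :: y' := by
  induction x generalizing y with
  | nil => exact Or.inl (List.nil_prefix)
  | cons a l ih =>
    cases y with
    | nil => exact Or.inr (Or.inl (List.nil_prefix))
    | cons c m =>
      by_cases hac : a = c
      · subst hac
        rcases ih m with h1 | h1 | ⟨u, x', y', b, hx, hy⟩
        · exact Or.inl (List.cons_prefix_cons.mpr ⟨rfl, h1⟩)
        · exact Or.inr (Or.inl (List.cons_prefix_cons.mpr ⟨rfl, h1⟩))
        · exact Or.inr (Or.inr ⟨a :: u, x', y', b, by simp [hx], by simp [hy]⟩)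
      · refine Or.inr (Or.inr ⟨[], l, m, a, by simp, ?_⟩)
        cases a <;> cases c <;> simp_all

lemma snoc_prefix_eq {z u v : List Bool} {b c : Bool}
    (hu : u ++ [b] <+: z) (hv : v ++ [c] <+: z) (hlen : u.length = v.length) :
    u = v ∧ b = c := by
  have h1 : u ++ [b] <+: v ++ [c] :=
    List.prefix_of_prefix_length_le hu hv (by simp [hlen])
  have h2 := h1.eq_of_length (by simp [hlen])
  have h3 := List.append_inj h2 hlen
  exact ⟨h3.1, by simpa using h3.2⟩

/-- Comparison of two marked divergence points inside the same list. -/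
lemma snoc_prefix_cases {z u v : List Bool} {b c : Bool}
    (hu : u ++ [b] <+: z) (hv : v ++ [c] <+: z) :
    (u ++ [b] <+: v) ∨ (v ++ [c] <+: u) ∨ (u = v ∧ b = c) := by
  rcases lt_trichotomy u.length v.length with hl | hl | hl
  · exact Or.inl (List.prefix_of_prefix_length_le hu
      ((List.prefix_append v [c]).trans hv) (by simpa using hl))
  · exact Or.inr (Or.inr (snoc_prefix_eq hu hv hl))
  · exact Or.inr (Or.inl (List.prefix_of_prefix_length_le hv
      ((List.prefix_append u [b]).trans hu) (by simpa using hl)))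

lemma marked_of_decomp {x u x' : List Bool} {b : Bool} (hx : x = u ++ b :: x') :
    u ++ [b] <+: x := ⟨x', by simp [hx]⟩

lemma prefix_of_decomp {x u x' : List Bool} {b : Bool} (hx : x = u ++ b :: x') :
    u <+: x := ⟨b :: x', hx.symm⟩

lemma decomp_of_marked {x u : List Bool} {b : Bool} (hx : u ++ [b] <+: x) :
    ∃ x', x = u ++ b :: x' := by
  obtain ⟨w, hw⟩ := hx
  exact ⟨w, by simp [← hw]⟩

lemma dfsGen_trans {b : Bool} {x y z : List Bool}
    (hxy : dfsGen b x y) (hyz : dfsGen b y z) : dfsGen b x z := by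
  rcases hxy with hxy | ⟨u, x', y', hx, hy⟩
  · rcases hyz with hyz | ⟨u, y', z', hy, hz⟩
    · exact Or.inl (hxy.trans hyz)
    · have hub : u ++ [b] <+: y := marked_of_decomp hy
      rcases le_or_gt x.length u.length with hl | hl
      · have hxu : x <+: u := List.prefix_of_prefix_length_le hxy
          ((List.prefix_append u [b]).trans hub) hl
        exact Or.inl (hxu.trans (prefix_of_decomp hz))
      · obtain ⟨w, hw⟩ := decomp_of_marked
          (List.prefix_of_prefix_length_le hub hxy (by simpa using hl))
        exact Or.inr ⟨u, w, z', hw, hz⟩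
  · rcases hyz with hyz | ⟨v, y₂, z₂, hy₂, hz⟩
    · obtain ⟨w, hw⟩ := decomp_of_marked ((marked_of_decomp hy).trans hyz)
      exact Or.inr ⟨u, x', w, hx, hw⟩
    · have h1 : u ++ [!b] <+: y := marked_of_decomp hy
      have h2 : v ++ [b] <+: y := marked_of_decomp hy₂
      rcases snoc_prefix_cases h1 h2 with hc | hc | ⟨hc, hbc⟩
      · obtain ⟨w, hw⟩ := decomp_of_marked (hc.trans (prefix_of_decomp hz))
        exact Or.inr ⟨u, x', w, hx, hw⟩
      · obtain ⟨w, hw⟩ := decomp_of_marked hc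
        refine Or.inr ⟨v, w ++ b :: x', z₂, ?_, hz⟩
        simp [hx, hw]
      · exact absurd hbc (by simp)

lemma dfsGen_antisymm {b : Bool} {x y : List Bool}
    (hxy : dfsGen b x y) (hyx : dfsGen b y x) : x = y := by
  rcases hxy with hxy | ⟨u, x', y', hx, hy⟩
  · rcases hyx with hyx | ⟨v, y₂, x₂, hy₂, hx₂⟩
    · exact hxy.eq_of_length (le_antisymm hxy.length_le hyx.length_le)
    · have h1 : v ++ [b] <+: y := marked_of_decomp hy₂
      have h2 : v ++ [!b] <+: y := (marked_of_decomp hx₂).trans hxy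
      exact absurd (snoc_prefix_eq h1 h2 rfl).2 (by simp)
  · rcases hyx with hyx | ⟨v, y₂, x₂, hy₂, hx₂⟩
    · have h1 : u ++ [b] <+: x := marked_of_decomp hx
      have h2 : u ++ [!b] <+: x := (marked_of_decomp hy).trans hyx
      exact absurd (snoc_prefix_eq h1 h2 rfl).2 (by simp)
    · have hux : u ++ [b] <+: x := marked_of_decomp hx
      have hvx : v ++ [!b] <+: x := marked_of_decomp hx₂
      have huy : u ++ [!b] <+: y := marked_of_decomp hy
      have hvy : v ++ [b] <+: y := marked_of_decomp hy₂
      rcases snoc_prefix_cases hux hvx with hc | hc | ⟨_, hbc⟩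
      · have : u ++ [b] <+: y := hc.trans (prefix_of_decomp hy₂)
        exact absurd (snoc_prefix_eq this huy rfl).2 (by simp)
      · have : v ++ [!b] <+: y := hc.trans (prefix_of_decomp hy)
        exact absurd (snoc_prefix_eq hvy this rfl).2 (by simp)
      · exact absurd hbc (by simp)

lemma dfsGen_total (b : Bool) (x y : List Bool) : dfsGen b x y ∨ dfsGen b y x := by
  rcases trich x y with h | h | ⟨u, x', y', c, hx, hy⟩
  · exact Or.inl (Or.inl h)
  · exact Or.inr (Or.inl h)
  · by_cases hcb : c = b
    · subst hcb; exact Or.inl (Or.inr ⟨u, x', y', hx, hy⟩)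
    · have hc : c = !b := by revert hcb; cases b <;> cases c <;> decide
      subst hc
      exact Or.inr (Or.inr ⟨u, y', x', by simpa using hy, hx⟩)

lemma dfsL_eq : dfsL = dfsGen false := rfl
lemma dfsR_eq : dfsR = dfsGen true := rfl

/-- for the complete binary tree of height `h ≥ 1` with the prefix order,
the two DFS traversals form a `2`-hitting family, and no single schedule is a
`2`-hitting family; hence the smallest `2`-hitting family has size exactly `2`. -/
theorem btree_two_hitting (h : ℕ) (hh : 1 ≤ h) :
    IsHittingFamily
      (![fun x y : BTree h => dfsL x.1 y.1, fun x y : BTree h => dfsR x.1 y.1]) 2 ∧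
    ∀ F : Fin 1 → (BTree h → BTree h → Prop), ¬ IsHittingFamily F 2 := by
  have hsched : ∀ b : Bool, IsSchedule (fun x y : BTree h => dfsGen b x.1 y.1) := by
    intro b
    refine ⟨?_, fun x y hxy => Or.inl hxy⟩
    exact { refl := fun x => Or.inl (List.prefix_refl x.1),
            trans := fun x y z => dfsGen_trans,
            antisymm := fun x y h1 h2 => Subtype.ext (dfsGen_antisymm h1 h2),
            total := fun x y => dfsGen_total b x.1 y.1 }
  constructor
  · constructor
    · intro i
      fin_cases i
      · simpa [dfsL_eq] using hsched false
      · simpa [dfsR_eq] using hsched true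
    · rintro a ⟨hinj, hadm⟩
      have hne : (a 0).1 ≠ (a 1).1 := fun hcon =>
        (by decide : ¬((0 : Fin 2) = 1)) (hinj (Subtype.ext hcon))
      have hnlt : ¬ (a 1 < a 0) := hadm 0 1 (by decide)
      rcases trich (a 0).1 (a 1).1 with hp | hp | ⟨u, x', y', c, hx, hy⟩
      · refine ⟨0, ?_⟩
        intro i j hij
        fin_cases i <;> fin_cases j <;>
          first
            | exact absurd hij (by decide)
            | exact Or.inl hp
      · exfalso
        have hle : a 1 ≤ a 0 := hp
        exact hnlt (lt_of_le_of_ne hle fun hc => hne (congrArg Subtype.val hc).symm)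
      · cases c
        · refine ⟨0, ?_⟩
          intro i j hij
          fin_cases i <;> fin_cases j <;>
            first
              | exact absurd hij (by decide)
              | exact Or.inr ⟨u, x', y', hx, by simpa using hy⟩
        · refine ⟨1, ?_⟩
          intro i j hij
          fin_cases i <;> fin_cases j <;>
            first
              | exact absurd hij (by decide)
              | exact Or.inr ⟨u, x', y', hx, by simpa using hy⟩
  · intro F hF
    set x : BTree h := ⟨[false], by simpa using hh⟩ with hxdef
    set y : BTree h := ⟨[true], by simpa using hh⟩ with hydef
    have hxney : x ≠ y := by
      intro hc
      have := congrArg Subtype.val hc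
      simp [hxdef, hydef] at this
    have hnxy : ¬ (x ≤ y) := by
      intro hc
      have h2 : ([false] : List Bool) <+: [true] := hc
      rcases List.cons_prefix_cons.mp h2 with ⟨h3, -⟩
      cases h3
    have hnyx : ¬ (y ≤ x) := by
      intro hc
      have h2 : ([true] : List Bool) <+: [false] := hc
      rcases List.cons_prefix_cons.mp h2 with ⟨h3, -⟩
      cases h3
    have adm1 : Admissible ![x, y] := by
      constructor
      · intro i j hij
        fin_cases i <;> fin_cases j <;> first | rfl | exact absurd hij hxney | exact absurd hij.symm hxney
      · intro i j hij
        fin_cases i <;> fin_cases j <;>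
          first
            | exact absurd hij (by decide)
            | exact fun hc => hnyx hc.le
    have adm2 : Admissible ![y, x] := by
      constructor
      · intro i j hij
        fin_cases i <;> fin_cases j <;> first | rfl | exact absurd hij hxney | exact absurd hij.symm hxney
      · intro i j hij
        fin_cases i <;> fin_cases j <;>
          first
            | exact absurd hij (by decide)
            | exact fun hc => hnxy hc.le
    obtain ⟨i, hi⟩ := hF.2 ![x, y] adm1
    obtain ⟨j, hj⟩ := hF.2 ![y, x] adm2
    have h1 : F i x y := by simpa using hi 0 1 (by decide)
    have h2 : F i y x := by
      have : i = j := Subsingleton.elim i j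
      subst this
      simpa using hj 0 1 (by decide)
    exact hxney (by haveI := (hF.1 i).1; exact antisymm h1 h2)
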